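/- Let Ψ be a real symmetric positive semidefinite m×m matrix and ρ, β ≥ 0 reals, and define the penalizer ψ(S) = −(ρ/2) log det(S) − (β/2) tr(Ψ S^{−1}) on symmetric positive definite m×m matrices. Then ψ is geodesically midpoint-concave: for all symmetric positive definite S, R ∈ ℝ^{m×m}, ψ(S # R) ≥ ½ ψ(S) + ½ ψ(R). -/

import Mathlib

open Matrix Real
open scoped Classical

/-- The unique symmetric positive semidefinite square root of a positive semidefinite
matrix (junk value `0` if the matrix is not positive semidefinite). -/
noncomputable def psqrt {m : ℕ} (M : Matrix (Fin m) (Fin m) ℝ) : Matrix (Fin m) (Fin m) ℝ :=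
  if h : M.PosSemidef then
    (h.1.eigenvectorUnitary : Matrix (Fin m) (Fin m) ℝ) *
      diagonal ((↑) ∘ (√·) ∘ h.1.eigenvalues) *
      (star h.1.eigenvectorUnitary : Matrix (Fin m) (Fin m) ℝ)
  else 0

/-- The geometric mean `S # R = S^{1/2} (S^{-1/2} R S^{-1/2})^{1/2} S^{1/2}` of two
positive definite matrices: the midpoint of the geodesic joining them in the
affine-invariant Riemannian metric. -/
noncomputable def geoMean {m : ℕ} (S R : Matrix (Fin m) (Fin m) ℝ) :
    Matrix (Fin m) (Fin m) ℝ :=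
  psqrt S * psqrt ((psqrt S)⁻¹ * R * (psqrt S)⁻¹) * psqrt S

lemma psqrt_posSemidef {m : ℕ} {M : Matrix (Fin m) (Fin m) ℝ} (h : M.PosSemidef) :
    (psqrt M).PosSemidef := by
  rw [psqrt, dif_pos h]
  have hD : (diagonal ((↑) ∘ (√·) ∘ h.1.eigenvalues) : Matrix (Fin m) (Fin m) ℝ).PosSemidef :=
    PosSemidef.diagonal fun i => by simp [Real.sqrt_nonneg]
  exact hD.mul_mul_conjTranspose_same _

lemma psqrt_mul_self {m : ℕ} {M : Matrix (Fin m) (Fin m) ℝ} (h : M.PosSemidef) :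
    psqrt M * psqrt M = M := by
  rw [psqrt, dif_pos h]
  conv_rhs => rw [h.1.spectral_theorem, Unitary.conjStarAlgAut_apply]
  have hU := Unitary.coe_star_mul_self h.1.eigenvectorUnitary
  set U : Matrix (Fin m) (Fin m) ℝ := (h.1.eigenvectorUnitary : Matrix (Fin m) (Fin m) ℝ)
  have hDD : (diagonal ((↑) ∘ (√·) ∘ h.1.eigenvalues) : Matrix (Fin m) (Fin m) ℝ) *
      diagonal ((↑) ∘ (√·) ∘ h.1.eigenvalues) = diagonal (RCLike.ofReal ∘ h.1.eigenvalues) := by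
    rw [diagonal_mul_diagonal]
    congr 1; funext i
    simp [Real.mul_self_sqrt (h.eigenvalues_nonneg i)]
  calc U * diagonal ((↑) ∘ (√·) ∘ h.1.eigenvalues) * star U *
        (U * diagonal ((↑) ∘ (√·) ∘ h.1.eigenvalues) * star U)
      = U * (diagonal ((↑) ∘ (√·) ∘ h.1.eigenvalues) * (star U * U) *
        diagonal ((↑) ∘ (√·) ∘ h.1.eigenvalues)) * star U := by simp only [mul_assoc]
    _ = _ := by rw [hU, mul_one, hDD]

lemma aux_trace_nonneg {m : ℕ} {M : Matrix (Fin m) (Fin m) ℝ} (hM : M.PosSemidef) :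
    0 ≤ M.trace := by
  rw [Matrix.trace]
  refine Finset.sum_nonneg fun i _ => ?_
  exact hM.diag_nonneg

lemma aux_trace_mul_nonneg {m : ℕ} {A B : Matrix (Fin m) (Fin m) ℝ} (hA : A.PosSemidef)
    (hB : B.PosSemidef) : 0 ≤ (A * B).trace := by
  have hc := psqrt_posSemidef hB
  have h1 : A * B = A * psqrt B * psqrt B := by rw [mul_assoc, psqrt_mul_self hB]
  have h2 : (A * B).trace = ((psqrt B)ᴴ * A * psqrt B).trace := by
    rw [h1, Matrix.trace_mul_cycle, hc.1]
  rw [h2]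
  exact aux_trace_nonneg (hA.conjTranspose_mul_mul_same _)

lemma aux_det_nonneg {m : ℕ} {A : Matrix (Fin m) (Fin m) ℝ} (hA : A.PosSemidef) : 0 ≤ A.det := by
  rw [hA.1.det_eq_prod_eigenvalues]
  exact Finset.prod_nonneg fun i _ => hA.eigenvalues_nonneg i

/-- the penalizer `ψ(S) = -(ρ/2) log det S - (β/2) tr(Ψ S⁻¹)` is
geodesically midpoint-concave on the positive definite matrices. -/
theorem penalizer_geodesically_midpoint_concave {m : ℕ}
    (Ψ : Matrix (Fin m) (Fin m) ℝ) (hΨ : Ψ.PosSemidef) (ρ β : ℝ) (hρ : 0 ≤ ρ) (hβ : 0 ≤ β)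
    (S R : Matrix (Fin m) (Fin m) ℝ) (hS : S.PosDef) (hR : R.PosDef) :
    (1/2) * (-(ρ/2) * Real.log S.det - β/2 * (Ψ * S⁻¹).trace)
      + (1/2) * (-(ρ/2) * Real.log R.det - β/2 * (Ψ * R⁻¹).trace)
      ≤ -(ρ/2) * Real.log (geoMean S R).det - β/2 * (Ψ * (geoMean S R)⁻¹).trace := by
  classical
  set s := psqrt S with hs_def
  have hsherm : s.IsHermitian := (psqrt_posSemidef hS.posSemidef).1
  have hss : s * s = S := psqrt_mul_self hS.posSemidef
  have hdetS : 0 < S.det := hS.det_pos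
  have hdetR : 0 < R.det := hR.det_pos
  have hssdet : s.det * s.det = S.det := by rw [← Matrix.det_mul, hss]
  have hdets0 : s.det ≠ 0 := by
    intro h; rw [h, mul_zero] at hssdet; exact (ne_of_gt hdetS) hssdet.symm
  have hdets : 0 < s.det :=
    lt_of_le_of_ne (aux_det_nonneg (psqrt_posSemidef hS.posSemidef)) (Ne.symm hdets0)
  have hsunit : IsUnit s.det := isUnit_iff_ne_zero.mpr hdets0
  -- T = s⁻¹ R s⁻¹
  set T := s⁻¹ * R * s⁻¹ with hT_def
  have hTpsd : T.PosSemidef := by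
    have := hR.posSemidef.conjTranspose_mul_mul_same (s⁻¹)
    rwa [hsherm.inv.eq] at this
  set t := psqrt T with ht_def
  have htherm : t.IsHermitian := (psqrt_posSemidef hTpsd).1
  have htt : t * t = T := psqrt_mul_self hTpsd
  have hdetsinv : (s⁻¹).det = (s.det)⁻¹ := by
    rw [Matrix.det_nonsing_inv, Ring.inverse_eq_inv]
  have hdetT : T.det = (s.det)⁻¹ * R.det * (s.det)⁻¹ := by
    rw [hT_def, Matrix.det_mul, Matrix.det_mul, hdetsinv]
  have httdet : t.det * t.det = T.det := by rw [← Matrix.det_mul, htt]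
  have hdetT_pos : 0 < T.det := by
    rw [hdetT]; positivity
  have hdett0 : t.det ≠ 0 := by
    intro h; rw [h, mul_zero] at httdet; exact (ne_of_gt hdetT_pos) httdet.symm
  have hdett : 0 < t.det :=
    lt_of_le_of_ne (aux_det_nonneg (psqrt_posSemidef hTpsd)) (Ne.symm hdett0)
  have htunit : IsUnit t.det := isUnit_iff_ne_zero.mpr hdett0
  -- geoMean = s t s
  have hG : geoMean S R = s * t * s := by
    rw [geoMean]
  set G := geoMean S R with hG_def
  -- determinant identity
  have hdetG : G.det = s.det * t.det * s.det := by
    rw [hG, Matrix.det_mul, Matrix.det_mul]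
  have hdetG_pos : 0 < G.det := by rw [hdetG]; positivity
  have hkey : G.det * G.det = S.det * R.det := by
    rw [hdetG]
    have h1 : s.det * t.det * s.det * (s.det * t.det * s.det)
        = (s.det * s.det) * (s.det * s.det) * (t.det * t.det) := by ring
    rw [h1, hssdet, httdet, hdetT]
    field_simp
    rw [← hssdet]; ring
  have hlog : Real.log G.det * 2 = Real.log S.det + Real.log R.det := by
    have := Real.log_mul (ne_of_gt hdetG_pos) (ne_of_gt hdetG_pos)
    rw [hkey, Real.log_mul (ne_of_gt hdetS) (ne_of_gt hdetR)] at this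
    linarith
  -- trace inequality
  set u := t⁻¹ with hu_def
  have huherm : u.IsHermitian := htherm.inv
  have hE : ((1 - u) * (1 - u)).PosSemidef := by
    have := Matrix.posSemidef_conjTranspose_mul_self (1 - u)
    rwa [Matrix.conjTranspose_sub, Matrix.conjTranspose_one, huherm.eq] at this
  have hF : (s⁻¹ * ((1 - u) * (1 - u)) * s⁻¹).PosSemidef := by
    have := hE.conjTranspose_mul_mul_same (s⁻¹)
    rwa [hsherm.inv.eq] at this
  have hSinv : S⁻¹ = s⁻¹ * s⁻¹ := by rw [← hss, Matrix.mul_inv_rev]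
  have hGinv : G⁻¹ = s⁻¹ * u * s⁻¹ := by
    rw [hG, Matrix.mul_inv_rev, Matrix.mul_inv_rev, ← mul_assoc, hu_def]
  have hR_eq : R = s * T * s := by
    rw [hT_def]
    have h1 : s * (s⁻¹ * R * s⁻¹) * s = (s * s⁻¹) * R * (s⁻¹ * s) := by noncomm_ring
    rw [h1, Matrix.mul_nonsing_inv _ hsunit, Matrix.nonsing_inv_mul _ hsunit, one_mul, mul_one]
  have hTinv : T⁻¹ = u * u := by rw [← htt, Matrix.mul_inv_rev, hu_def]
  have hRinv : R⁻¹ = s⁻¹ * (u * u) * s⁻¹ := by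
    rw [hR_eq, Matrix.mul_inv_rev, Matrix.mul_inv_rev, hTinv, ← mul_assoc, ← mul_assoc]
  have hident : s⁻¹ * ((1 - u) * (1 - u)) * s⁻¹ = S⁻¹ + R⁻¹ - (G⁻¹ + G⁻¹) := by
    rw [hSinv, hRinv, hGinv]; noncomm_ring
  have htr : 0 ≤ (Ψ * (S⁻¹ + R⁻¹ - (G⁻¹ + G⁻¹))).trace :=
    aux_trace_mul_nonneg hΨ (hident ▸ hF)
  have htr' : (Ψ * G⁻¹).trace + (Ψ * G⁻¹).trace ≤ (Ψ * S⁻¹).trace + (Ψ * R⁻¹).trace := by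
    rw [Matrix.mul_sub, Matrix.mul_add, Matrix.mul_add, Matrix.trace_sub,
      Matrix.trace_add, Matrix.trace_add] at htr
    linarith
  -- combine
  have hρc : ρ * (Real.log G.det * 2) = ρ * (Real.log S.det + Real.log R.det) := by rw [hlog]
  have hβc : β * ((Ψ * G⁻¹).trace + (Ψ * G⁻¹).trace)
      ≤ β * ((Ψ * S⁻¹).trace + (Ψ * R⁻¹).trace) := mul_le_mul_of_nonneg_left htr' hβ
  nlinarith [hρc, hβc]
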